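/- Let X be a normed ring, let r be a natural number with r ≥ 2 and p ≥ 0 a real number, and let f : 𝓘 → X satisfy ‖f‖²_{−r,−p} < ∞. Then for every n ≥ 1, every natural number s ≥ r and every real q > p + 1, the n-th Wick power f^{◊n} (defined by f^{◊1} = f and f^{◊n} = f^{◊(n−1)} ◊ f) satisfies ‖f^{◊n}‖²_{−s,−q} = ∑_{γ∈𝓘} γ! · ‖(f^{◊n})_γ‖² · ((s^{|γ|³})!)^{−1} · (2ℕ)^{−qγ} < ∞. -/

import Mathlib

abbrev MultiIndex : Type := ℕ →₀ ℕ

/-- `|α| = ∑ₙ αₙ` -/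
def msize (α : MultiIndex) : ℕ := α.sum fun _ k => k

/-- `α! = ∏ₙ (αₙ)!` -/
def mfact (α : MultiIndex) : ℕ := α.prod fun _ k => k.factorial

/-- `(2ℕ)^{cα} = ∏ₙ (2n)^{c·αₙ}`; the index `n : ℕ` stands for the position `n+1 ≥ 1`. -/
noncomputable def wt (c : ℝ) (α : MultiIndex) : ℝ :=
  α.prod fun n k => (2 * ((n : ℝ) + 1)) ^ (c * (k : ℝ))


/-- The Wick product: `(f ◊ g)_γ = ∑_{β ≤ γ} f_β · g_{γ-β}`. -/
noncomputable def wick {X : Type*} [NormedRing X] (f g : MultiIndex → X) :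
    MultiIndex → X :=
  fun γ => ∑ p ∈ Finset.HasAntidiagonal.antidiagonal γ, f p.1 * g p.2

/-- The summand of the squared `(FS)_{-r,-p}`-norm:
`α! · ‖f_α‖² · ((r^{|α|³})!)⁻¹ · (2ℕ)^{-pα}`. -/
noncomputable def fsTerm {X : Type*} [NormedRing X] (r : ℕ) (p : ℝ)
    (f : MultiIndex → X) (α : MultiIndex) : ℝ :=
  (mfact α : ℝ) * ‖f α‖ ^ 2 * ((r ^ (msize α) ^ 3).factorial : ℝ)⁻¹ * wt (-p) α


/-- Wick powers, shifted by one: `wickPow f n = f^{◊(n+1)}`, i.e.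
`wickPow f 0 = f = f^{◊1}` and `wickPow f n = wickPow f (n-1) ◊ f = f^{◊(n+1)}`. -/
noncomputable def wickPow {X : Type*} [NormedRing X] (f : MultiIndex → X) :
    ℕ → MultiIndex → X
  | 0 => f
  | n + 1 => wick (wickPow f n) f

lemma wt_pos (c : ℝ) (α : MultiIndex) : 0 < wt c α := by
  unfold wt Finsupp.prod
  exact Finset.prod_pos fun n _ => Real.rpow_pos_of_pos (by positivity) _

lemma wt_add (c : ℝ) (α β : MultiIndex) : wt c (α + β) = wt c α * wt c β := by
  unfold wt
  refine Finsupp.prod_add_index' (fun n => by simp) (fun n b₁ b₂ => ?_)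
  have h : (0:ℝ) < 2*((n:ℝ)+1) := by positivity
  rw [show (c * ((b₁ + b₂ : ℕ) : ℝ)) = c * b₁ + c * b₂ by push_cast; ring, Real.rpow_add h]

lemma wt_mono {c c' : ℝ} (h : c ≤ c') (α : MultiIndex) : wt c α ≤ wt c' α := by
  unfold wt Finsupp.prod
  refine Finset.prod_le_prod (fun n _ => (Real.rpow_pos_of_pos (by positivity) _).le)
    (fun n _ => Real.rpow_le_rpow_of_exponent_le (by have : (0:ℝ) ≤ (n:ℝ) := Nat.cast_nonneg n; linarith) ?_)
  exact mul_le_mul_of_nonneg_right h (Nat.cast_nonneg _)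

lemma msize_add (α β : MultiIndex) : msize (α + β) = msize α + msize β := by
  unfold msize
  exact Finsupp.sum_add_index' (fun _ => rfl) (fun _ _ _ => rfl)

lemma wt_zero_c (α : MultiIndex) : wt 0 α = 1 := by
  unfold wt; simp [Finsupp.prod]

lemma wt_le_one {c : ℝ} (hc : c ≤ 0) (α : MultiIndex) : wt c α ≤ 1 := by
  simpa [wt_zero_c] using wt_mono hc α

lemma support_left_subset (β δ : MultiIndex) : β.support ⊆ (β + δ).support := by
  intro n hn
  simp only [Finsupp.mem_support_iff, Finsupp.add_apply] at *
  omega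

lemma one_le_msize {α : MultiIndex} (h : α ≠ 0) : 1 ≤ msize α := by
  obtain ⟨n, hn⟩ : ∃ n, α n ≠ 0 := by
    by_contra h'
    push_neg at h'
    exact h (Finsupp.ext h')
  have hmem : n ∈ α.support := Finsupp.mem_support_iff.2 hn
  have : α n ≤ msize α := Finset.single_le_sum (fun i _ => Nat.zero_le _) hmem
  omega

lemma choose_le_two_pow (n k : ℕ) : n.choose k ≤ 2 ^ n := by
  rcases le_or_gt k n with h | h
  · calc n.choose k ≤ ∑ m ∈ Finset.range (n+1), n.choose m :=
        Finset.single_le_sum (fun _ _ => Nat.zero_le _) (Finset.mem_range.2 (Nat.lt_succ_of_le h))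
      _ = 2 ^ n := Nat.sum_range_choose n
  · simp [Nat.choose_eq_zero_of_lt h]

lemma factorial_add_le (a b : ℕ) :
    (a + b).factorial ≤ 2 ^ (a + b) * (a.factorial * b.factorial) := by
  have h := Nat.choose_mul_factorial_mul_factorial (Nat.le_add_right a b)
  simp only [Nat.add_sub_cancel_left] at h
  calc (a+b).factorial = (a+b).choose a * a.factorial * b.factorial := h.symm
    _ ≤ 2 ^ (a+b) * a.factorial * b.factorial :=
        Nat.mul_le_mul_right _ (Nat.mul_le_mul_right _ (choose_le_two_pow _ _))
    _ = 2 ^ (a+b) * (a.factorial * b.factorial) := by ring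

lemma mfact_add_le (β δ : MultiIndex) :
    mfact (β + δ) ≤ 2 ^ msize (β + δ) * (mfact β * mfact δ) := by
  set γ := β + δ with hγ
  have hβ : β.support ⊆ γ.support := support_left_subset β δ
  have hδ : δ.support ⊆ γ.support := by
    rw [hγ, add_comm]; exact support_left_subset δ β
  have e1 : mfact β = ∏ n ∈ γ.support, (β n).factorial :=
    Finsupp.prod_of_support_subset β hβ _ (fun i _ => rfl)
  have e2 : mfact δ = ∏ n ∈ γ.support, (δ n).factorial :=
    Finsupp.prod_of_support_subset δ hδ _ (fun i _ => rfl)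
  have e3 : 2 ^ msize γ = ∏ n ∈ γ.support, 2 ^ (γ n) := by
    rw [Finset.prod_pow_eq_pow_sum]; rfl
  have : mfact γ ≤ ∏ n ∈ γ.support, (2 ^ (γ n) * ((β n).factorial * (δ n).factorial)) := by
    refine Finset.prod_le_prod' (fun n _ => ?_)
    have : γ n = β n + δ n := rfl
    rw [this]
    exact factorial_add_le _ _
  calc mfact γ ≤ ∏ n ∈ γ.support, (2 ^ (γ n) * ((β n).factorial * (δ n).factorial)) := this
    _ = (∏ n ∈ γ.support, 2 ^ (γ n)) * ((∏ n ∈ γ.support, (β n).factorial) *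
        (∏ n ∈ γ.support, (δ n).factorial)) := by rw [Finset.prod_mul_distrib, Finset.prod_mul_distrib]
    _ = 2 ^ msize γ * (mfact β * mfact δ) := by rw [e1, e2, e3]

lemma two_pow_mul_factorial_le {x : ℕ} (hx : 1 ≤ x) (k : ℕ) :
    2 ^ k * x.factorial ≤ (x + k).factorial := by
  induction k with
  | zero => simp
  | succ k ih =>
    have e : (x + (k+1)).factorial = (x + k + 1) * (x + k).factorial := rfl
    calc 2 ^ (k+1) * x.factorial = 2 * (2 ^ k * x.factorial) := by ring
      _ ≤ 2 * (x + k).factorial := Nat.mul_le_mul_left _ ih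
      _ ≤ (x + k + 1) * (x + k).factorial := Nat.mul_le_mul_right _ (by omega)
      _ = (x + (k+1)).factorial := e.symm

lemma pow_cube_slack {a b s : ℕ} (ha : 1 ≤ a) (hb : 1 ≤ b) (hs : 2 ≤ s) :
    s ^ a ^ 3 + s ^ b ^ 3 + 4 * (a + b) ≤ s ^ (a + b) ^ 3 := by
  have hs1 : 1 ≤ s := by omega
  have h1 : (a+b)^3 = (a^3 + b^3) + 3*a*b*(a+b) := by ring
  have e : s ^ (a+b)^3 = s ^ (a^3 + b^3) * s ^ (3*a*b*(a+b)) := by rw [h1, pow_add]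
  have h6 : 6 ≤ 3*a*b*(a+b) := by
    have hab : 1 * 1 ≤ a * b := Nat.mul_le_mul ha hb
    have hab' : 1 ≤ a * b := by simpa using hab
    calc (6:ℕ) = 3 * 1 * 2 := by norm_num
      _ ≤ 3 * (a*b) * (a+b) := Nat.mul_le_mul (Nat.mul_le_mul le_rfl hab') (by omega)
      _ = 3*a*b*(a+b) := by ring
  have h64 : 64 ≤ s ^ (3*a*b*(a+b)) := by
    calc (64:ℕ) = 2 ^ 6 := by norm_num
      _ ≤ s ^ 6 := Nat.pow_le_pow_left hs 6
      _ ≤ s ^ (3*a*b*(a+b)) := Nat.pow_le_pow_right hs1 h6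
  have hA : s ^ a^3 ≤ s ^ (a^3 + b^3) := Nat.pow_le_pow_right hs1 (Nat.le_add_right _ _)
  have hB : s ^ b^3 ≤ s ^ (a^3 + b^3) := Nat.pow_le_pow_right hs1 (Nat.le_add_left _ _)
  have hm : a + b ≤ s ^ (a^3 + b^3) := by
    have h2 : a + b ≤ a^3 + b^3 := by
      have ha3 : a ≤ a^3 := Nat.le_self_pow (by norm_num) a
      have hb3 : b ≤ b^3 := Nat.le_self_pow (by norm_num) b
      omega
    calc a + b ≤ 2 ^ (a + b) := Nat.lt_two_pow_self.le
      _ ≤ 2 ^ (a^3 + b^3) := Nat.pow_le_pow_right (by norm_num) h2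
      _ ≤ s ^ (a^3 + b^3) := Nat.pow_le_pow_left hs _
  have hpos : 0 < s ^ (a^3 + b^3) := Nat.pow_pos (by omega)
  rw [e]
  nlinarith

lemma key_fact {a b r s : ℕ} (ha : 1 ≤ a) (hb : 1 ≤ b) (hr : 2 ≤ r) (hrs : r ≤ s) :
    16 ^ (a+b) * ((s ^ a^3).factorial * (r ^ b^3).factorial) ≤ (s ^ (a+b)^3).factorial := by
  have hs : 2 ≤ s := hr.trans hrs
  have h1 : (r ^ b^3).factorial ≤ (s ^ b^3).factorial :=
    Nat.factorial_le (Nat.pow_le_pow_left hrs _)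
  have h2 : (s^a^3).factorial * (s^b^3).factorial ≤ (s^a^3 + s^b^3).factorial :=
    Nat.le_of_dvd (Nat.factorial_pos _) (Nat.factorial_mul_factorial_dvd_factorial_add _ _)
  have hx : 1 ≤ s^a^3 + s^b^3 := by
    have : 0 < s^a^3 := Nat.pow_pos (by omega)
    omega
  have h3 : 2^(4*(a+b)) * (s^a^3 + s^b^3).factorial ≤ (s^a^3 + s^b^3 + 4*(a+b)).factorial :=
    two_pow_mul_factorial_le hx _
  have h4 : (s^a^3 + s^b^3 + 4*(a+b)).factorial ≤ (s^(a+b)^3).factorial :=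
    Nat.factorial_le (pow_cube_slack ha hb hs)
  have h16 : (16:ℕ)^(a+b) = 2^(4*(a+b)) := by rw [pow_mul]; norm_num
  calc 16^(a+b) * ((s^a^3).factorial * (r^b^3).factorial)
      ≤ 16^(a+b) * ((s^a^3).factorial * (s^b^3).factorial) :=
        Nat.mul_le_mul_left _ (Nat.mul_le_mul_left _ h1)
    _ ≤ 16^(a+b) * (s^a^3 + s^b^3).factorial := Nat.mul_le_mul_left _ h2
    _ = 2^(4*(a+b)) * (s^a^3 + s^b^3).factorial := by rw [h16]
    _ ≤ (s^a^3 + s^b^3 + 4*(a+b)).factorial := h3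
    _ ≤ (s^(a+b)^3).factorial := h4

lemma card_antidiagonal_le (γ : MultiIndex) :
    (Finset.HasAntidiagonal.antidiagonal γ).card ≤ 2 ^ msize γ := by
  have h1 : (Finset.HasAntidiagonal.antidiagonal γ).card ≤ (Finset.Iic γ).card := by
    refine Finset.card_le_card_of_injOn Prod.fst (fun pr hpr => ?_) ?_
    · rw [Finset.mem_coe, Finset.HasAntidiagonal.mem_antidiagonal] at hpr
      rw [Finset.mem_coe, Finset.mem_Iic]
      intro n
      have : pr.1 n + pr.2 n = γ n := by rw [← hpr]; rfl
      omega
    · intro pr hpr pr' hpr' h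
      rw [Finset.mem_coe, Finset.HasAntidiagonal.mem_antidiagonal] at hpr hpr'
      have h2 : pr.2 = pr'.2 := by
        have := hpr.trans hpr'.symm
        rw [h] at this
        exact add_left_cancel this
      exact Prod.ext h h2
  have h2 : (Finset.Iic γ).card = ∏ i ∈ γ.support, (γ i + 1) := by
    rw [Finsupp.card_Iic]
    exact Finset.prod_congr rfl (fun i _ => Nat.card_Iic _)
  have h3 : ∏ i ∈ γ.support, (γ i + 1) ≤ ∏ i ∈ γ.support, 2 ^ (γ i) :=
    Finset.prod_le_prod' (fun i _ => Nat.lt_two_pow_self)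
  have h4 : ∏ i ∈ γ.support, 2 ^ (γ i) = 2 ^ msize γ := by
    rw [Finset.prod_pow_eq_pow_sum]; rfl
  omega

/-- weight part of `fsTerm` -/
noncomputable def fsW (r : ℕ) (p : ℝ) (α : MultiIndex) : ℝ :=
  (mfact α : ℝ) * ((r ^ (msize α) ^ 3).factorial : ℝ)⁻¹ * wt (-p) α

lemma fsW_pos (r : ℕ) (p : ℝ) (α : MultiIndex) : 0 < fsW r p α := by
  unfold fsW
  have h1 : (0:ℝ) < (mfact α : ℝ) := by
    have : 0 < mfact α := Finset.prod_pos (fun i _ => Nat.factorial_pos _)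
    exact_mod_cast this
  have h2 : (0:ℝ) < ((r ^ (msize α) ^ 3).factorial : ℝ) := by exact_mod_cast Nat.factorial_pos _
  exact mul_pos (mul_pos h1 (inv_pos.2 h2)) (wt_pos _ _)

lemma fsTerm_eq {X : Type*} [NormedRing X] (r : ℕ) (p : ℝ) (f : MultiIndex → X)
    (α : MultiIndex) : fsTerm r p f α = ‖f α‖ ^ 2 * fsW r p α := by
  unfold fsTerm fsW; ring

lemma fsTerm_nonneg {X : Type*} [NormedRing X] (r : ℕ) (p : ℝ) (f : MultiIndex → X)
    (α : MultiIndex) : 0 ≤ fsTerm r p f α := by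
  rw [fsTerm_eq]
  exact mul_nonneg (by positivity) (fsW_pos _ _ _).le

lemma fsW_mono {r s : ℕ} (hrs : r ≤ s) {p q : ℝ} (hpq : p ≤ q) (α : MultiIndex) :
    fsW s q α ≤ fsW r p α := by
  unfold fsW
  have h1 : ((s ^ (msize α) ^ 3).factorial : ℝ)⁻¹ ≤ ((r ^ (msize α) ^ 3).factorial : ℝ)⁻¹ := by
    apply inv_anti₀
    · exact_mod_cast Nat.factorial_pos _
    · exact_mod_cast Nat.factorial_le (Nat.pow_le_pow_left hrs _)
  have h2 : wt (-q) α ≤ wt (-p) α := wt_mono (by linarith) α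
  have hm : (0:ℝ) ≤ (mfact α : ℝ) := Nat.cast_nonneg _
  apply mul_le_mul (mul_le_mul_of_nonneg_left h1 hm) h2 (wt_pos _ _).le
  positivity

lemma fsTerm_mono {X : Type*} [NormedRing X] {r s : ℕ} (hrs : r ≤ s) {p q : ℝ} (hpq : p ≤ q)
    (f : MultiIndex → X) (α : MultiIndex) : fsTerm s q f α ≤ fsTerm r p f α := by
  rw [fsTerm_eq, fsTerm_eq]
  exact mul_le_mul_of_nonneg_left (fsW_mono hrs hpq α) (by positivity)

lemma aux_div {A C F Fb Fd : ℝ} (hF : 0 < F) (hFb : 0 < Fb) (hFd : 0 < Fd)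
    (h : A * (Fb * Fd) ≤ C * F) : A * F⁻¹ ≤ C * (Fb⁻¹ * Fd⁻¹) := by
  have h2 : A / F ≤ C / (Fb * Fd) := (div_le_div_iff₀ hF (mul_pos hFb hFd)).2 h
  calc A * F⁻¹ = A / F := by rw [div_eq_mul_inv]
    _ ≤ C / (Fb * Fd) := h2
    _ = C * (Fb⁻¹ * Fd⁻¹) := by rw [div_eq_mul_inv, mul_inv]

lemma middle_weight {r s : ℕ} (hr : 2 ≤ r) (hrs : r ≤ s) {p q : ℝ} (hpq : p ≤ q)
    {β δ : MultiIndex} (hβ : β ≠ 0) (hδ : δ ≠ 0) :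
    (2:ℝ) ^ msize (β + δ) * fsW s q (β + δ) ≤ fsW s q β * fsW r p δ := by
  have ha : 1 ≤ msize β := one_le_msize hβ
  have hb : 1 ≤ msize δ := one_le_msize hδ
  have hm : msize (β + δ) = msize β + msize δ := msize_add β δ
  set a := msize β with hadef
  set b := msize δ with hbdef
  set F : ℝ := ((s ^ (a + b) ^ 3).factorial : ℝ) with hFdef
  set Fb : ℝ := ((s ^ a ^ 3).factorial : ℝ) with hFbdef
  set Fd : ℝ := ((r ^ b ^ 3).factorial : ℝ) with hFddef
  have hFpos : 0 < F := by rw [hFdef]; exact_mod_cast Nat.factorial_pos _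
  have hFbpos : 0 < Fb := by rw [hFbdef]; exact_mod_cast Nat.factorial_pos _
  have hFdpos : 0 < Fd := by rw [hFddef]; exact_mod_cast Nat.factorial_pos _
  have hkey : (16:ℝ)^(a+b) * (Fb * Fd) ≤ F := by
    rw [hFdef, hFbdef, hFddef]
    exact_mod_cast key_fact ha hb hr hrs
  have hcross : ((4:ℝ)^(a+b) * ((mfact β:ℝ) * (mfact δ:ℝ))) * (Fb * Fd) ≤
      ((mfact β:ℝ)*(mfact δ:ℝ)) * F := by
    calc ((4:ℝ)^(a+b) * ((mfact β:ℝ)*(mfact δ:ℝ))) * (Fb * Fd)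
        = ((mfact β:ℝ)*(mfact δ:ℝ)) * ((4:ℝ)^(a+b) * (Fb*Fd)) := by ring
      _ ≤ ((mfact β:ℝ)*(mfact δ:ℝ)) * ((16:ℝ)^(a+b) * (Fb*Fd)) := by
          refine mul_le_mul_of_nonneg_left ?_ (by positivity)
          refine mul_le_mul_of_nonneg_right ?_ (by positivity)
          exact pow_le_pow_left₀ (by norm_num) (by norm_num) (a+b)
      _ ≤ ((mfact β:ℝ)*(mfact δ:ℝ)) * F := mul_le_mul_of_nonneg_left hkey (by positivity)
  have hdiv := aux_div hFpos hFbpos hFdpos hcross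
  have hmf : (mfact (β+δ) : ℝ) ≤ 2^(a+b) * ((mfact β:ℝ)*(mfact δ:ℝ)) := by
    have := mfact_add_le β δ
    rw [hm] at this
    exact_mod_cast this
  have hwt : wt (-q) (β+δ) ≤ wt (-q) β * wt (-p) δ := by
    rw [wt_add]
    exact mul_le_mul_of_nonneg_left (wt_mono (by linarith) δ) (wt_pos _ _).le
  unfold fsW
  rw [hm]
  calc (2:ℝ)^(a+b) * ((mfact (β+δ):ℝ) * F⁻¹ * wt (-q) (β+δ))
      ≤ (2:ℝ)^(a+b) * ((2^(a+b) * ((mfact β:ℝ)*(mfact δ:ℝ))) * F⁻¹ * (wt (-q) β * wt (-p) δ)) := by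
        refine mul_le_mul_of_nonneg_left ?_ (by positivity)
        refine mul_le_mul (mul_le_mul_of_nonneg_right hmf (by positivity)) hwt (wt_pos _ _).le
          (by positivity)
    _ = ((4:ℝ)^(a+b) * ((mfact β:ℝ)*(mfact δ:ℝ))) * F⁻¹ * (wt (-q) β * wt (-p) δ) := by
        rw [show ((4:ℝ)^(a+b)) = 2^(a+b) * 2^(a+b) by rw [← mul_pow]; norm_num]
        ring
    _ ≤ (((mfact β:ℝ)*(mfact δ:ℝ)) * (Fb⁻¹ * Fd⁻¹)) * (wt (-q) β * wt (-p) δ) :=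
        mul_le_mul_of_nonneg_right hdiv (mul_nonneg (wt_pos _ _).le (wt_pos _ _).le)
    _ = ((mfact β:ℝ) * Fb⁻¹ * wt (-q) β) * ((mfact δ:ℝ) * Fd⁻¹ * wt (-p) δ) := by ring

lemma wick_term_le {X : Type*} [NormedRing X] {r s : ℕ} (hr : 2 ≤ r) (hrs : r ≤ s)
    {p q : ℝ} (hpq : p ≤ q) (g f : MultiIndex → X) (γ : MultiIndex) :
    fsTerm s q (wick g f) γ ≤
      3 * (fsTerm s q g γ * ‖f 0‖^2 + ‖g 0‖^2 * fsTerm r p f γ +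
        ∑ pr ∈ Finset.HasAntidiagonal.antidiagonal γ, fsTerm s q g pr.1 * fsTerm r p f pr.2) := by
  classical
  set T := Finset.HasAntidiagonal.antidiagonal γ with hT
  set T' := T.filter (fun pr => ¬ pr.2 = 0 ∧ ¬ pr.1 = 0) with hT'
  set a := ‖g γ‖ * ‖f 0‖ with hadef
  set b := ‖g 0‖ * ‖f γ‖ with hbdef
  set c := ∑ pr ∈ T', ‖g pr.1‖ * ‖f pr.2‖ with hcdef
  have ha0 : 0 ≤ a := by positivity
  have hb0 : 0 ≤ b := by positivity
  have hc0 : 0 ≤ c := Finset.sum_nonneg (fun pr _ => by positivity)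
  -- Step 1 : norm bound
  have h1 : ‖wick g f γ‖ ≤ a + b + c := by
    have step1 : ‖wick g f γ‖ ≤ ∑ pr ∈ T, ‖g pr.1‖ * ‖f pr.2‖ :=
      (norm_sum_le _ _).trans (Finset.sum_le_sum fun pr _ => norm_mul_le _ _)
    refine step1.trans ?_
    have hsplit : ∑ pr ∈ T, ‖g pr.1‖ * ‖f pr.2‖ =
        (∑ pr ∈ T.filter (fun pr => pr.2 = 0), ‖g pr.1‖ * ‖f pr.2‖) +
        ∑ pr ∈ T.filter (fun pr => ¬ pr.2 = 0), ‖g pr.1‖ * ‖f pr.2‖ :=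
      (Finset.sum_filter_add_sum_filter_not T _ _).symm
    have hsplit2 : ∑ pr ∈ T.filter (fun pr => ¬ pr.2 = 0), ‖g pr.1‖ * ‖f pr.2‖ =
        (∑ pr ∈ (T.filter (fun pr => ¬ pr.2 = 0)).filter (fun pr => pr.1 = 0),
          ‖g pr.1‖ * ‖f pr.2‖) +
        ∑ pr ∈ (T.filter (fun pr => ¬ pr.2 = 0)).filter (fun pr => ¬ pr.1 = 0),
          ‖g pr.1‖ * ‖f pr.2‖ :=
      (Finset.sum_filter_add_sum_filter_not _ _ _).symm
    have hA : ∑ pr ∈ T.filter (fun pr => pr.2 = 0), ‖g pr.1‖ * ‖f pr.2‖ ≤ a := by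
      have hsub : T.filter (fun pr => pr.2 = 0) ⊆ {(γ, 0)} := by
        intro pr hpr
        rw [Finset.mem_filter, hT, Finset.HasAntidiagonal.mem_antidiagonal] at hpr
        rw [Finset.mem_singleton]
        obtain ⟨h1, h2⟩ := hpr
        have : pr.1 = γ := by rw [← h1, h2, add_zero]
        exact Prod.ext this h2
      calc ∑ pr ∈ T.filter (fun pr => pr.2 = 0), ‖g pr.1‖ * ‖f pr.2‖
          ≤ ∑ pr ∈ ({(γ, 0)} : Finset (MultiIndex × MultiIndex)), ‖g pr.1‖ * ‖f pr.2‖ :=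
            Finset.sum_le_sum_of_subset_of_nonneg hsub (fun pr _ _ => by positivity)
        _ = a := by rw [Finset.sum_singleton]
    have hB : ∑ pr ∈ (T.filter (fun pr => ¬ pr.2 = 0)).filter (fun pr => pr.1 = 0),
        ‖g pr.1‖ * ‖f pr.2‖ ≤ b := by
      have hsub : (T.filter (fun pr => ¬ pr.2 = 0)).filter (fun pr => pr.1 = 0) ⊆ {(0, γ)} := by
        intro pr hpr
        rw [Finset.mem_filter, Finset.mem_filter, hT, Finset.HasAntidiagonal.mem_antidiagonal] at hpr
        rw [Finset.mem_singleton]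
        obtain ⟨⟨h1, _⟩, h3⟩ := hpr
        have : pr.2 = γ := by rw [← h1, h3, zero_add]
        exact Prod.ext h3 this
      calc ∑ pr ∈ (T.filter (fun pr => ¬ pr.2 = 0)).filter (fun pr => pr.1 = 0),
            ‖g pr.1‖ * ‖f pr.2‖
          ≤ ∑ pr ∈ ({(0, γ)} : Finset (MultiIndex × MultiIndex)), ‖g pr.1‖ * ‖f pr.2‖ :=
            Finset.sum_le_sum_of_subset_of_nonneg hsub (fun pr _ _ => by positivity)
        _ = b := by rw [Finset.sum_singleton]
    have hC : (T.filter (fun pr => ¬ pr.2 = 0)).filter (fun pr => ¬ pr.1 = 0) = T' := by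
      rw [Finset.filter_filter]
    rw [hsplit, hsplit2, hC]
    linarith
  -- Step 2 : square
  have hsq : ‖wick g f γ‖^2 ≤ 3*(a^2 + b^2 + c^2) := by
    have h2 : ‖wick g f γ‖^2 ≤ (a + b + c)^2 := pow_le_pow_left₀ (norm_nonneg _) h1 2
    nlinarith [sq_nonneg (a - b), sq_nonneg (a - c), sq_nonneg (b - c)]
  set W := fsW s q γ with hW
  have hWpos : 0 < W := fsW_pos _ _ _
  -- term bounds
  have tA : a^2 * W = fsTerm s q g γ * ‖f 0‖^2 := by
    rw [fsTerm_eq, hadef, mul_pow]; ring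
  have tB : b^2 * W ≤ ‖g 0‖^2 * fsTerm r p f γ := by
    rw [fsTerm_eq, hbdef, mul_pow]
    have := fsW_mono hrs hpq γ
    calc ‖g 0‖^2 * ‖f γ‖^2 * W ≤ ‖g 0‖^2 * ‖f γ‖^2 * fsW r p γ := by
          refine mul_le_mul_of_nonneg_left this (by positivity)
      _ = ‖g 0‖^2 * (‖f γ‖^2 * fsW r p γ) := by ring
  have tC : c^2 * W ≤ ∑ pr ∈ T, fsTerm s q g pr.1 * fsTerm r p f pr.2 := by
    have hCS : c^2 ≤ (T'.card : ℝ) * ∑ pr ∈ T', (‖g pr.1‖ * ‖f pr.2‖)^2 := by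
      rw [hcdef]
      exact sq_sum_le_card_mul_sum_sq
    have hcard : (T'.card : ℝ) ≤ (2:ℝ)^(msize γ) := by
      have h1 : T'.card ≤ T.card := Finset.card_le_card (Finset.filter_subset _ _)
      have h2 : T.card ≤ 2 ^ msize γ := card_antidiagonal_le γ
      calc (T'.card : ℝ) ≤ ((2 ^ msize γ : ℕ) : ℝ) := by exact_mod_cast h1.trans h2
        _ = (2:ℝ)^(msize γ) := by push_cast; ring
    have hper : ∀ pr ∈ T', (‖g pr.1‖ * ‖f pr.2‖)^2 * ((2:ℝ)^(msize γ) * W) ≤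
        fsTerm s q g pr.1 * fsTerm r p f pr.2 := by
      intro pr hpr
      rw [hT', Finset.mem_filter, hT, Finset.HasAntidiagonal.mem_antidiagonal] at hpr
      obtain ⟨hsum, h2ne, h1ne⟩ := hpr
      have hmw := middle_weight hr hrs hpq h1ne h2ne
      rw [hsum] at hmw
      calc (‖g pr.1‖ * ‖f pr.2‖)^2 * ((2:ℝ)^(msize γ) * W)
          ≤ (‖g pr.1‖ * ‖f pr.2‖)^2 * (fsW s q pr.1 * fsW r p pr.2) :=
            mul_le_mul_of_nonneg_left hmw (by positivity)
        _ = fsTerm s q g pr.1 * fsTerm r p f pr.2 := by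
            rw [fsTerm_eq, fsTerm_eq, mul_pow]; ring
    calc c^2 * W ≤ ((T'.card : ℝ) * ∑ pr ∈ T', (‖g pr.1‖ * ‖f pr.2‖)^2) * W :=
          mul_le_mul_of_nonneg_right hCS hWpos.le
      _ ≤ ((2:ℝ)^(msize γ) * ∑ pr ∈ T', (‖g pr.1‖ * ‖f pr.2‖)^2) * W := by
          refine mul_le_mul_of_nonneg_right (mul_le_mul_of_nonneg_right hcard ?_) hWpos.le
          exact Finset.sum_nonneg (fun pr _ => by positivity)
      _ = ∑ pr ∈ T', (‖g pr.1‖ * ‖f pr.2‖)^2 * ((2:ℝ)^(msize γ) * W) := by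
          rw [Finset.mul_sum, Finset.sum_mul]
          exact Finset.sum_congr rfl (fun pr _ => by ring)
      _ ≤ ∑ pr ∈ T', fsTerm s q g pr.1 * fsTerm r p f pr.2 := Finset.sum_le_sum hper
      _ ≤ ∑ pr ∈ T, fsTerm s q g pr.1 * fsTerm r p f pr.2 :=
          Finset.sum_le_sum_of_subset_of_nonneg (Finset.filter_subset _ _)
            (fun pr _ _ => mul_nonneg (fsTerm_nonneg _ _ _ _) (fsTerm_nonneg _ _ _ _))
  have hmain : fsTerm s q (wick g f) γ ≤ 3*(a^2 + b^2 + c^2) * W := by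
    rw [fsTerm_eq]
    exact mul_le_mul_of_nonneg_right hsq hWpos.le
  have e : 3*(a^2 + b^2 + c^2) * W = 3*(a^2*W + b^2*W + c^2*W) := by ring
  rw [e] at hmain
  linarith

lemma summable_wick {X : Type*} [NormedRing X] {r s : ℕ} (hr : 2 ≤ r) (hrs : r ≤ s)
    {p q : ℝ} (hpq : p ≤ q) {g f : MultiIndex → X}
    (hg : Summable (fsTerm s q g)) (hf : Summable (fsTerm r p f)) :
    Summable (fsTerm s q (wick g f)) := by
  have hD : Summable (fun γ => fsTerm s q g γ * ‖f 0‖^2 + ‖g 0‖^2 * fsTerm r p f γ +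
      ∑ pr ∈ Finset.HasAntidiagonal.antidiagonal γ, fsTerm s q g pr.1 * fsTerm r p f pr.2) := by
    refine Summable.add (Summable.add (hg.mul_right _) (hf.mul_left _)) ?_
    exact summable_sum_mul_antidiagonal_of_summable_mul
      (Summable.mul_of_nonneg hg hf (fun _ => fsTerm_nonneg _ _ _ _)
        (fun _ => fsTerm_nonneg _ _ _ _))
  exact Summable.of_nonneg_of_le (fun γ => fsTerm_nonneg _ _ _ _)
    (fun γ => wick_term_le hr hrs hpq g f γ) (hD.mul_left 3)

theorem stmt_5 {X : Type*} [NormedRing X] (r : ℕ) (hr : 2 ≤ r) (p : ℝ) (hp : 0 ≤ p)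
    (f : MultiIndex → X) (hf : Summable (fsTerm r p f)) :
    ∀ n : ℕ, 1 ≤ n → ∀ s : ℕ, r ≤ s → ∀ q : ℝ, p + 1 < q →
      Summable (fsTerm s q (wickPow f (n - 1))) := by
  intro n hn s hs q hq
  have hpq : p ≤ q := by linarith
  have key : ∀ m : ℕ, Summable (fsTerm s q (wickPow f m)) := by
    intro m
    induction m with
    | zero =>
      exact Summable.of_nonneg_of_le (fun γ => fsTerm_nonneg _ _ _ _)
        (fun γ => fsTerm_mono hs hpq f γ) hf
    | succ m ih =>
      exact summable_wick hr hs hpq ih hf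
  exact key (n - 1)
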